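/- Let N ≥ 1 and n ≥ 1, let μ be probability weights on {1,…,N}, and for each integer k ≥ 1 let p_k : {1,…,N} → ℝ be nonnegative and nondecreasing (0 ≤ p_k(j) ≤ p_k(j') whenever j ≤ j'). Let p(j) = Σ_{k≥1} p_k(j) t^k ∈ ℝ[[t]]. Then every coefficient of the formal power series E_n(p,…,p) is nonnegative. -/

import Mathlib

open Finset

/-- The formal power series `p(j) = ∑_{k ≥ 1} p_k(j) t^k` (zero constant term). -/
noncomputable def pSer {Ω : Type*} (p : ℕ → Ω → ℝ) (ω : Ω) : PowerSeries ℝ :=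
  PowerSeries.mk fun k => if k = 0 then 0 else p k ω

/-- The power series `E_n(p,…,p) = ∑_{σ ⊢ [n]} (-1)^{ℓ(σ)+1} (∏_i (|σ_i|-1)!)
∏_i (∑_j μ(j) p(j)^{|σ_i|})`. -/
noncomputable def EnSer {Ω : Type*} [Fintype Ω] (μ : Ω → ℝ) (p : ℕ → Ω → ℝ) (n : ℕ) :
    PowerSeries ℝ :=
  ∑ σ : Finpartition (Finset.univ : Finset (Fin n)),
    PowerSeries.C ((-1 : ℝ) ^ (σ.parts.card + 1) *
        ∏ b ∈ σ.parts, ((b.card - 1).factorial : ℝ)) *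
      ∏ b ∈ σ.parts, (∑ ω, PowerSeries.C (μ ω) * (pSer p ω) ^ b.card)

namespace Stmt10


variable {α : Type*} [DecidableEq α]

/-- Add a new element `a` to the block `b₀` (possibly `∅`) of a partition. -/
def augment {s : Finset α} {a : α} (τ : Finpartition s) (ha : a ∉ s)
    {b₀ : Finset α} (hb₀ : b₀ ∈ insert ∅ τ.parts) : Finpartition (insert a s) where
  parts := insert (insert a b₀) (τ.parts.erase b₀)
  supIndep := by
    have hb₀s : b₀ ⊆ s := by
      rcases Finset.mem_insert.1 hb₀ with rfl | hb
      · exact Finset.empty_subset _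
      · exact τ.le hb
    rw [Finset.supIndep_iff_pairwiseDisjoint, Finset.coe_insert]
    refine Set.PairwiseDisjoint.insert
      ((τ.disjoint.subset (by exact_mod_cast Finset.erase_subset _ _))) ?_
    intro c hc hne
    have hcp : c ∈ τ.parts := Finset.mem_of_mem_erase (by exact_mod_cast hc)
    have hac : a ∉ c := fun h => ha (τ.le hcp h)
    show Disjoint (insert a b₀) c
    rw [Finset.disjoint_insert_left]
    refine ⟨hac, ?_⟩
    rcases Finset.mem_insert.1 hb₀ with rfl | hb
    · simp
    · exact τ.disjoint hb hcp (by
        intro h; subst h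
        exact (Finset.ne_of_mem_erase (by exact_mod_cast hc)) rfl)
  sup_parts := by
    rw [Finset.sup_insert]
    have h1 : b₀ ⊔ (τ.parts.erase b₀).sup id = s := by
      rcases Finset.mem_insert.1 hb₀ with rfl | hb
      · have : τ.parts.erase ∅ = τ.parts :=
          Finset.erase_eq_of_notMem (by simpa using τ.bot_notMem)
        rw [this, τ.sup_parts]
        simp
      · have : (insert b₀ (τ.parts.erase b₀)).sup id = τ.parts.sup id := by
          rw [Finset.insert_erase hb]
        rw [Finset.sup_insert] at this
        show id b₀ ⊔ (τ.parts.erase b₀).sup id = s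
        rw [this, τ.sup_parts]
    have h2 : (id (insert a b₀) : Finset α) ⊔ (τ.parts.erase b₀).sup id
        = insert a (b₀ ⊔ (τ.parts.erase b₀).sup id) := by
      simp only [id, Finset.sup_eq_union]
      exact Finset.insert_union _ _ _
    rw [h2, h1]
  bot_notMem := by
    simp only [Finset.bot_eq_empty, Finset.mem_insert]
    rintro (h | h)
    · exact (Finset.insert_ne_empty a b₀) h.symm
    · exact τ.bot_notMem (by simpa using Finset.mem_of_mem_erase h)

@[simp] lemma augment_parts {s : Finset α} {a : α} (τ : Finpartition s) (ha : a ∉ s)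
    {b₀ : Finset α} (hb₀ : b₀ ∈ insert ∅ τ.parts) :
    (augment τ ha hb₀).parts = insert (insert a b₀) (τ.parts.erase b₀) := rfl

/-- Remove element `a` from a partition of `s`, giving a partition of `s.erase a`. -/
def restrictErase {s : Finset α} (σ : Finpartition s) {a : α} (has : a ∈ s) :
    Finpartition (s.erase a) :=
  Finpartition.ofErase (insert ((σ.part a).erase a) (σ.parts.erase (σ.part a)))
    (by
      rw [Finset.supIndep_iff_pairwiseDisjoint, Finset.coe_insert]
      refine Set.PairwiseDisjoint.insert
        ((σ.disjoint.subset (by exact_mod_cast Finset.erase_subset _ _))) ?_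
      intro c hc _
      have hcp : c ∈ σ.parts := Finset.mem_of_mem_erase (by exact_mod_cast hc)
      have hne : c ≠ σ.part a := Finset.ne_of_mem_erase (by exact_mod_cast hc)
      show Disjoint ((σ.part a).erase a) c
      exact Finset.disjoint_of_subset_left (Finset.erase_subset _ _)
        (σ.disjoint (σ.part_mem.2 has) hcp (fun h => hne h.symm)))
    (by
      apply Finset.ext
      intro x
      simp only [Finset.mem_sup, Finset.mem_insert, Finset.mem_erase]
      constructor
      · rintro ⟨c, hc | hc, hxc⟩
        · subst hc
          rcases Finset.mem_erase.1 hxc with ⟨hxa, hxB⟩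
          exact ⟨hxa, σ.le (σ.part_mem.2 has) hxB⟩
        · have hcp : c ∈ σ.parts := hc.2
          have hne : c ≠ σ.part a := hc.1
          refine ⟨?_, σ.le hcp hxc⟩
          rintro rfl
          exact hne (σ.part_eq_of_mem hcp hxc).symm
      · rintro ⟨hxa, hxs⟩
        by_cases h : σ.part x = σ.part a
        · exact ⟨(σ.part a).erase a, Or.inl rfl,
            Finset.mem_erase.2 ⟨hxa, h ▸ σ.mem_part hxs⟩⟩
        · exact ⟨σ.part x, Or.inr ⟨h, σ.part_mem.2 hxs⟩, σ.mem_part hxs⟩)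

lemma restrictErase_parts {s : Finset α} (σ : Finpartition s) {a : α} (has : a ∈ s) :
    (restrictErase σ has).parts
      = (insert ((σ.part a).erase a) (σ.parts.erase (σ.part a))).erase ∅ := by
  simp [restrictErase, Finpartition.ofErase]

noncomputable def hS (v : Finset α → ℝ) (s : Finset α) : ℝ :=
  ∑ σ : Finpartition s, (-1 : ℝ) ^ σ.parts.card * ∏ b ∈ σ.parts, v b

lemma parts_eq_empty {t : Finset α} (ht : t = ∅) (τ : Finpartition t) : τ.parts = ∅ := by
  subst ht
  rw [Finset.eq_empty_iff_forall_notMem]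
  intro b hb
  have h1 : b ⊆ ∅ := τ.le hb
  have h2 : b ≠ ∅ := by simpa using τ.ne_bot hb
  exact h2 (Finset.subset_empty.1 h1)

lemma hS_empty (v : Finset α → ℝ) {t : Finset α} (ht : t = ∅) : hS v t = 1 := by
  subst ht
  have : ∀ τ : Finpartition (∅ : Finset α),
      (-1 : ℝ) ^ τ.parts.card * ∏ b ∈ τ.parts, v b = 1 := by
    intro τ
    rw [parts_eq_empty rfl τ]
    simp
  rw [hS, Finset.sum_congr rfl (fun τ _ => this τ)]
  rw [Finset.sum_const, nsmul_eq_mul, mul_one]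
  norm_cast

lemma insert_not_mem_erase {t : Finset α} {a : α} (hat : a ∉ t) (τ : Finpartition t)
    (b₀ : Finset α) : insert a b₀ ∉ τ.parts.erase b₀ := by
  intro h
  exact hat (τ.le (Finset.mem_of_mem_erase h) (Finset.mem_insert_self a b₀))

lemma hS_ins (v : Finset α → ℝ) {s : Finset α} {a : α} (has : a ∈ s)
    (hins : ∀ b : Finset α, b ⊆ s.erase a → b.Nonempty → v (insert a b) = b.card * v b) :
    hS v s = (((s.card : ℝ) - 1) - v {a}) * hS v (s.erase a) := by
  classical
  set t := s.erase a with ht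
  have hat : a ∉ t := Finset.notMem_erase a s
  have hts : insert a t = s := Finset.insert_erase has
  set F : (Σ _ : Finpartition t, Finset α) → ℝ := fun x =>
    (-1 : ℝ) ^ ((x.1.parts.erase x.2).card + 1) *
      (v (insert a x.2) * ∏ b ∈ x.1.parts.erase x.2, v b) with hF
  have hBmem : ∀ σ : Finpartition s,
      (σ.part a).erase a ∈ insert ∅ (restrictErase σ has).parts := by
    intro σ
    by_cases h : (σ.part a).erase a = ∅
    · rw [h]; exact Finset.mem_insert_self _ _
    · refine Finset.mem_insert_of_mem ?_
      rw [restrictErase_parts]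
      exact Finset.mem_erase.2 ⟨h, Finset.mem_insert_self _ _⟩
  have keyval : ∀ (τ : Finpartition t) (b₀ : Finset α) (hb₀ : b₀ ∈ insert ∅ τ.parts),
      (-1 : ℝ) ^ (((augment τ hat hb₀).copy hts).parts.card) *
          ∏ b ∈ ((augment τ hat hb₀).copy hts).parts, v b = F ⟨τ, b₀⟩ := by
    intro τ b₀ hb₀
    rw [Finpartition.copy_parts, augment_parts,
      Finset.card_insert_of_notMem (insert_not_mem_erase hat τ b₀),
      Finset.prod_insert (insert_not_mem_erase hat τ b₀)]
  have hleft : ∀ σ : Finpartition s,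
      (augment (restrictErase σ has) hat (hBmem σ)).copy hts = σ := by
    intro σ
    apply Finpartition.ext
    rw [Finpartition.copy_parts, augment_parts, restrictErase_parts]
    have hBp : σ.part a ∈ σ.parts := σ.part_mem.2 has
    have haB : a ∈ σ.part a := σ.mem_part has
    have h2 : (σ.part a).erase a ∉ σ.parts.erase (σ.part a) := by
      intro h
      obtain ⟨x, hx⟩ := σ.nonempty_of_mem_parts (Finset.mem_of_mem_erase h)
      exact (Finset.ne_of_mem_erase h)
        (σ.eq_of_mem_parts (Finset.mem_of_mem_erase h) hBp hx (Finset.mem_of_mem_erase hx))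
    have hemptyX : ∅ ∉ σ.parts.erase (σ.part a) := by
      intro h
      exact σ.bot_notMem (by simpa using Finset.mem_of_mem_erase h)
    rw [Finset.insert_erase haB, Finset.erase_right_comm, Finset.erase_insert_eq_erase,
      Finset.erase_eq_of_notMem h2, Finset.erase_eq_of_notMem hemptyX,
      Finset.insert_erase hBp]
  have hright : ∀ (τ : Finpartition t) (b₀ : Finset α) (hb₀ : b₀ ∈ insert ∅ τ.parts),
      ((⟨restrictErase ((augment τ hat hb₀).copy hts) has,
          ((((augment τ hat hb₀).copy hts)).part a).erase a⟩ : Σ _ : Finpartition t, Finset α)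
        = ⟨τ, b₀⟩) := by
    intro τ b₀ hb₀
    set P := (augment τ hat hb₀).copy hts with hP
    have hPparts : P.parts = insert (insert a b₀) (τ.parts.erase b₀) := by
      rw [hP, Finpartition.copy_parts, augment_parts]
    have hab₀ : a ∉ b₀ := by
      rcases Finset.mem_insert.1 hb₀ with rfl | hb
      · simp
      · exact fun h => hat (τ.le hb h)
    have hPa : P.part a = insert a b₀ := by
      refine P.part_eq_of_mem ?_ (Finset.mem_insert_self a b₀)
      rw [hPparts]; exact Finset.mem_insert_self _ _
    have hsnd : (P.part a).erase a = b₀ := by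
      rw [hPa, Finset.erase_insert_eq_erase, Finset.erase_eq_of_notMem hab₀]
    have hfst : restrictErase P has = τ := by
      apply Finpartition.ext
      rw [restrictErase_parts, hsnd, hPa, hPparts, Finset.erase_insert_eq_erase,
        Finset.erase_eq_of_notMem (insert_not_mem_erase hat τ b₀)]
      have hemptyp : (∅ : Finset α) ∉ τ.parts := by simpa using τ.bot_notMem
      rcases Finset.mem_insert.1 hb₀ with rfl | hb
      · rw [Finset.erase_insert_eq_erase, Finset.erase_eq_of_notMem
          (fun h => hemptyp (Finset.mem_of_mem_erase h)),
          Finset.erase_eq_of_notMem hemptyp]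
      · rw [Finset.insert_erase hb, Finset.erase_eq_of_notMem hemptyp]
    exact Sigma.ext hfst (heq_of_eq hsnd)
  have step1 : hS v s =
      ∑ x ∈ (Finset.univ : Finset (Finpartition t)).sigma (fun τ => insert ∅ τ.parts), F x := by
    rw [hS]
    refine Finset.sum_bij'
      (i := fun (σ : Finpartition s) (_ : σ ∈ Finset.univ) =>
        (⟨restrictErase σ has, (σ.part a).erase a⟩ : Σ _ : Finpartition t, Finset α))
      (j := fun x hx => (augment x.1 hat ((Finset.mem_sigma.1 hx).2)).copy hts)
      (fun σ _ => Finset.mem_sigma.2 ⟨Finset.mem_univ _, hBmem σ⟩)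
      (fun x hx => Finset.mem_univ _)
      (fun σ hσ => ?_) (fun x hx => ?_) (fun σ hσ => ?_)
    · exact hleft σ
    · obtain ⟨τ, b₀⟩ := x
      exact hright τ b₀ ((Finset.mem_sigma.1 hx).2)
    · conv_lhs => rw [← hleft σ]
      exact keyval _ _ (hBmem σ)
  have hcard : ((t.card : ℝ)) = (s.card : ℝ) - 1 := by
    rw [ht, Finset.card_erase_of_mem has]
    have h1 : 1 ≤ s.card := Finset.card_pos.2 ⟨a, has⟩
    push_cast [Nat.cast_sub h1]
    ring
  have inner : ∀ τ : Finpartition t, (∑ b₀ ∈ insert ∅ τ.parts, F ⟨τ, b₀⟩)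
      = (((s.card : ℝ) - 1) - v {a}) * ((-1 : ℝ) ^ τ.parts.card * ∏ b ∈ τ.parts, v b) := by
    intro τ
    have hemptyp : (∅ : Finset α) ∉ τ.parts := by simpa using τ.bot_notMem
    rw [Finset.sum_insert hemptyp]
    have h0 : F ⟨τ, ∅⟩ = -((-1 : ℝ) ^ τ.parts.card * (v {a} * ∏ b ∈ τ.parts, v b)) := by
      rw [hF]
      dsimp only
      rw [Finset.erase_eq_of_notMem hemptyp, Finset.insert_empty, pow_succ]
      ring
    have hterm : ∀ b₀ ∈ τ.parts, F ⟨τ, b₀⟩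
        = (-1 : ℝ) ^ τ.parts.card * ((b₀.card : ℝ) * ∏ b ∈ τ.parts, v b) := by
      intro b₀ hb₀
      rw [hF]
      dsimp only
      have hc : (τ.parts.erase b₀).card + 1 = τ.parts.card := by
        rw [Finset.card_erase_of_mem hb₀]
        exact Nat.succ_pred_eq_of_pos (Finset.card_pos.2 ⟨b₀, hb₀⟩)
      rw [hc, hins b₀ (τ.le hb₀) (τ.nonempty_of_mem_parts hb₀)]
      rw [mul_assoc, Finset.mul_prod_erase τ.parts v hb₀]
    rw [Finset.sum_congr rfl hterm, h0, ← Finset.mul_sum, ← Finset.sum_mul]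
    have hsum : (∑ b₀ ∈ τ.parts, (b₀.card : ℝ)) = ((s.card : ℝ) - 1) := by
      rw [← hcard]
      exact_mod_cast congrArg (Nat.cast : ℕ → ℝ) τ.sum_card_parts
    rw [hsum]
    ring
  rw [step1, Finset.sum_sigma, Finset.sum_congr rfl (fun τ _ => inner τ), ← Finset.mul_sum, hS]

lemma hS_nonpos (v : Finset α → ℝ)
    (H : ∀ s : Finset α, s.Nonempty → ∃ a ∈ s, (0 ≤ v {a} ∧ v {a} ≤ 1) ∧
        ∀ b : Finset α, b ⊆ s.erase a → b.Nonempty → v (insert a b) = b.card * v b) :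
    ∀ s : Finset α, s.Nonempty → hS v s ≤ 0 := by
  intro s
  induction s using Finset.strongInduction with
  | _ s ih =>
    intro hs
    obtain ⟨a, has, ⟨hv0, hv1⟩, hins⟩ := H s hs
    rw [hS_ins v has hins]
    by_cases he : s.erase a = ∅
    · rw [hS_empty v he]
      have h1 : s.card = 1 := by
        have h2 := Finset.card_erase_of_mem has
        rw [he] at h2
        simp only [Finset.card_empty] at h2
        have h3 : 1 ≤ s.card := Finset.card_pos.2 ⟨a, has⟩
        omega
      rw [h1]
      push_cast
      linarith
    · have hne : (s.erase a).Nonempty := Finset.nonempty_of_ne_empty he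
      have hrec := ih _ (Finset.erase_ssubset has) hne
      have hcard2 : 2 ≤ s.card := by
        have h1 : 1 ≤ (s.erase a).card := Finset.card_pos.2 hne
        have h2 := Finset.card_erase_of_mem has
        omega
      have hfac : 0 ≤ ((s.card : ℝ) - 1) - v {a} := by
        have : (2 : ℝ) ≤ (s.card : ℝ) := by exact_mod_cast hcard2
        linarith
      exact mul_nonpos_of_nonneg_of_nonpos hfac hrec


variable {N n : ℕ}


variable {N n : ℕ}

def ind (j ω : Fin N) : ℝ := if j ≤ ω then 1 else 0

def pn (p : ℕ → Fin N → ℝ) (k : ℕ) (j : ℕ) : ℝ := if h : j < N then p k ⟨j, h⟩ else 0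

def Gfun (p : ℕ → Fin N → ℝ) (k : ℕ) (j : ℕ) : ℝ := if j = 0 then 0 else pn p k (j - 1)

noncomputable def gSer (p : ℕ → Fin N → ℝ) (j : Fin N) : PowerSeries ℝ :=
  PowerSeries.mk fun k => if k = 0 then 0 else Gfun p k ((j : ℕ) + 1) - Gfun p k (j : ℕ)

lemma pSer_eq_sum (p : ℕ → Fin N → ℝ) (ω : Fin N) :
    pSer p ω = ∑ j : Fin N, PowerSeries.C (ind j ω) * gSer p j := by
  ext k
  rw [map_sum]
  simp only [PowerSeries.coeff_C_mul, pSer, gSer, PowerSeries.coeff_mk]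
  by_cases hk : k = 0
  · simp [hk]
  · simp only [hk, if_false]
    have hrw : ∀ j : Fin N, ind j ω * (Gfun p k ((j : ℕ) + 1) - Gfun p k (j : ℕ))
        = (fun m : ℕ => (if m ∈ Finset.range ((ω : ℕ) + 1) then
            (Gfun p k (m + 1) - Gfun p k m) else 0)) (j : ℕ) := by
      intro j
      simp only [ind, Finset.mem_range, Nat.lt_succ_iff, Fin.le_def]
      by_cases h : (j : ℕ) ≤ (ω : ℕ) <;> simp [h]
    rw [Finset.sum_congr rfl (fun j _ => hrw j)]
    rw [Fin.sum_univ_eq_sum_range (fun m : ℕ => (if m ∈ Finset.range ((ω : ℕ) + 1) then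
            (Gfun p k (m + 1) - Gfun p k m) else 0)) N]
    rw [Finset.sum_ite_mem]
    have hint : Finset.range N ∩ Finset.range ((ω : ℕ) + 1) = Finset.range ((ω : ℕ) + 1) := by
      apply Finset.inter_eq_right.2
      intro x hx
      rw [Finset.mem_range] at *
      omega
    rw [hint, Finset.sum_range_sub (f := Gfun p k)]
    simp only [Gfun, pn, Nat.add_sub_cancel, if_pos, Nat.succ_ne_zero, if_false, if_true]
    rw [dif_pos ω.2]
    simp

lemma blockA (μ : Fin N → ℝ) (p : ℕ → Fin N → ℝ) (b : Finset (Fin n)) :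
    (∑ ω, PowerSeries.C (μ ω) * (pSer p ω) ^ b.card)
      = ∑ φ : (b → Fin N),
          PowerSeries.C (∑ ω, μ ω * ∏ i : b, ind (φ i) ω) * ∏ i : b, gSer p (φ i) := by
  have h1 : ∀ ω : Fin N, (pSer p ω) ^ b.card
      = ∑ φ : (b → Fin N),
          PowerSeries.C (∏ i : b, ind (φ i) ω) * ∏ i : b, gSer p (φ i) := by
    intro ω
    have h2 : (pSer p ω) ^ b.card = ∏ _i : b, pSer p ω := by
      rw [Finset.prod_const, Finset.card_univ, Fintype.card_coe]
    rw [h2, Finset.prod_congr rfl (fun i _ => pSer_eq_sum p ω),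
      Finset.prod_univ_sum (t := fun _ : b => (Finset.univ : Finset (Fin N)))
        (f := fun _ j => PowerSeries.C (ind j ω) * gSer p j),
      Fintype.piFinset_univ]
    refine Finset.sum_congr rfl (fun φ _ => ?_)
    rw [Finset.prod_mul_distrib, ← map_prod]
  calc (∑ ω, PowerSeries.C (μ ω) * (pSer p ω) ^ b.card)
      = ∑ ω, ∑ φ : (b → Fin N),
          PowerSeries.C (μ ω * ∏ i : b, ind (φ i) ω) * ∏ i : b, gSer p (φ i) := by
        refine Finset.sum_congr rfl (fun ω _ => ?_)
        rw [h1 ω, Finset.mul_sum]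
        refine Finset.sum_congr rfl (fun φ _ => ?_)
        simp only [map_mul, mul_assoc]
    _ = ∑ φ : (b → Fin N), ∑ ω,
          PowerSeries.C (μ ω * ∏ i : b, ind (φ i) ω) * ∏ i : b, gSer p (φ i) :=
        Finset.sum_comm
    _ = _ := by
        refine Finset.sum_congr rfl (fun φ _ => ?_)
        rw [← Finset.sum_mul, ← map_sum]

def Vfun (μ : Fin N → ℝ) (ℓ : Fin n → Fin N) (b : Finset (Fin n)) : ℝ :=
  ∑ ω, μ ω * ∏ i ∈ b, ind (ℓ i) ω

lemma blockB (μ : Fin N → ℝ) (p : ℕ → Fin N → ℝ)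
    (σ : Finpartition (Finset.univ : Finset (Fin n))) :
    ∏ b ∈ σ.parts, (∑ ω, PowerSeries.C (μ ω) * (pSer p ω) ^ b.card)
    = ∑ ℓ : Fin n → Fin N,
        PowerSeries.C (∏ b ∈ σ.parts, Vfun μ ℓ b) * ∏ i, gSer p (ℓ i) := by
  classical
  rw [Finset.prod_congr rfl (fun b _ => blockA μ p b)]
  rw [Finset.prod_sum]
  have hval : ∀ ℓ : Fin n → Fin N,
      (∏ x ∈ σ.parts.attach,
        (PowerSeries.C (∑ ω, μ ω * ∏ i : (x.1 : Finset (Fin n)), ind (ℓ i) ω) *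
          ∏ i : (x.1 : Finset (Fin n)), gSer p (ℓ i)))
      = PowerSeries.C (∏ b ∈ σ.parts, Vfun μ ℓ b) * ∏ i, gSer p (ℓ i) := by
    intro ℓ
    rw [Finset.prod_mul_distrib]
    congr 1
    · rw [← map_prod]
      congr 1
      rw [← Finset.prod_attach σ.parts (fun b => Vfun μ ℓ b)]
      refine Finset.prod_congr rfl (fun x _ => ?_)
      rw [Vfun]
      refine Finset.sum_congr rfl (fun ω _ => ?_)
      rw [Finset.prod_coe_sort (s := (x.1 : Finset (Fin n))) (f := fun i => ind (ℓ i) ω)]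
    · have hglue : ∏ b ∈ σ.parts, ∏ i ∈ b, gSer p (ℓ i) = ∏ i : Fin n, gSer p (ℓ i) := by
        have h := Finset.prod_biUnion (s := σ.parts) (t := id) (f := fun i => gSer p (ℓ i))
          (fun b hb c hc hbc => σ.disjoint hb hc hbc)
        rw [σ.biUnion_parts] at h
        exact h.symm
      rw [Finset.prod_congr rfl (fun (x : {x // x ∈ σ.parts}) _ =>
        Finset.prod_coe_sort (s := (x.1 : Finset (Fin n))) (f := fun i => gSer p (ℓ i))),
        Finset.prod_attach σ.parts (fun b => ∏ i ∈ b, gSer p (ℓ i)), hglue]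
  refine Finset.sum_bij'
    (i := fun P _ => (fun x : Fin n =>
      P (σ.part x) (σ.part_mem.2 (Finset.mem_univ x)) ⟨x, σ.mem_part (Finset.mem_univ x)⟩))
    (j := fun ℓ _ => (fun b _ i => ℓ i))
    (fun P _ => Finset.mem_univ _)
    (fun ℓ _ => Finset.mem_pi.2 (fun b hb => Finset.mem_univ _))
    ?_ ?_ ?_
  · -- left inverse : j (i P) = P
    intro P hP
    funext b hb i
    obtain ⟨iv, hiv⟩ := i
    have hpb : σ.part iv = b := σ.part_eq_of_mem hb hiv
    subst hpb
    rfl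
  · intro ℓ _
    rfl
  · intro P hP
    have hleft : (fun b _ i => (fun x : Fin n =>
        P (σ.part x) (σ.part_mem.2 (Finset.mem_univ x)) ⟨x, σ.mem_part (Finset.mem_univ x)⟩) i.1)
        = P := by
      funext b hb i
      obtain ⟨iv, hiv⟩ := i
      have hpb : σ.part iv = b := σ.part_eq_of_mem hb hiv
      subst hpb
      rfl
    conv_lhs => rw [← hleft]
    exact hval _

noncomputable def Kfun (μ : Fin N → ℝ) (n : ℕ) (ℓ : Fin n → Fin N) : ℝ :=
  ∑ σ : Finpartition (Finset.univ : Finset (Fin n)),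
    (-1 : ℝ) ^ (σ.parts.card + 1) *
      ∏ b ∈ σ.parts, (((b.card - 1).factorial : ℝ) * Vfun μ ℓ b)

lemma EnSer_expand (μ : Fin N → ℝ) (p : ℕ → Fin N → ℝ) :
    EnSer μ p n = ∑ ℓ : Fin n → Fin N,
      PowerSeries.C (Kfun μ n ℓ) * ∏ i, gSer p (ℓ i) := by
  calc EnSer μ p n
      = ∑ σ : Finpartition (Finset.univ : Finset (Fin n)),
          ∑ ℓ : Fin n → Fin N,
            PowerSeries.C (((-1 : ℝ) ^ (σ.parts.card + 1) *
                ∏ b ∈ σ.parts, ((b.card - 1).factorial : ℝ)) * ∏ b ∈ σ.parts, Vfun μ ℓ b) *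
              ∏ i, gSer p (ℓ i) := by
        rw [EnSer]
        refine Finset.sum_congr rfl (fun σ _ => ?_)
        rw [blockB μ p σ, Finset.mul_sum]
        refine Finset.sum_congr rfl (fun ℓ _ => ?_)
        simp only [map_mul, mul_assoc]
    _ = ∑ ℓ : Fin n → Fin N,
          ∑ σ : Finpartition (Finset.univ : Finset (Fin n)),
            PowerSeries.C (((-1 : ℝ) ^ (σ.parts.card + 1) *
                ∏ b ∈ σ.parts, ((b.card - 1).factorial : ℝ)) * ∏ b ∈ σ.parts, Vfun μ ℓ b) *
              ∏ i, gSer p (ℓ i) := Finset.sum_comm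
    _ = _ := by
        refine Finset.sum_congr rfl (fun ℓ _ => ?_)
        rw [← Finset.sum_mul, ← map_sum]
        congr 2
        rw [Kfun]
        refine Finset.sum_congr rfl (fun σ _ => ?_)
        rw [Finset.prod_mul_distrib, mul_assoc]

/-- Nonnegativity of all coefficients. -/
def NN (f : PowerSeries ℝ) : Prop := ∀ m, 0 ≤ PowerSeries.coeff m f

lemma NN_one : NN (1 : PowerSeries ℝ) := by
  intro m
  rw [PowerSeries.coeff_one]
  split <;> norm_num

lemma NN_mul {f g : PowerSeries ℝ} (hf : NN f) (hg : NN g) : NN (f * g) := by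
  intro m
  rw [PowerSeries.coeff_mul]
  exact Finset.sum_nonneg (fun x _ => mul_nonneg (hf x.1) (hg x.2))

lemma NN_prod {ι : Type*} (t : Finset ι) (f : ι → PowerSeries ℝ) (h : ∀ i ∈ t, NN (f i)) :
    NN (∏ i ∈ t, f i) := by
  classical
  induction t using Finset.induction_on with
  | empty => simpa using NN_one
  | insert x t' hx ih =>
    rw [Finset.prod_insert hx]
    exact NN_mul (h x (Finset.mem_insert_self _ _))
      (ih (fun i hi => h i (Finset.mem_insert_of_mem hi)))

lemma NN_gSer (p : ℕ → Fin N → ℝ) (hp0 : ∀ k, 1 ≤ k → ∀ j, 0 ≤ p k j)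
    (hpmono : ∀ k, 1 ≤ k → Monotone (p k)) (j : Fin N) : NN (gSer p j) := by
  intro m
  rw [gSer, PowerSeries.coeff_mk]
  by_cases hm : m = 0
  · simp [hm]
  · have hm1 : 1 ≤ m := Nat.one_le_iff_ne_zero.2 hm
    rw [if_neg hm]
    have hjN : (j : ℕ) < N := j.2
    have h1 : Gfun p m ((j : ℕ) + 1) = p m j := by
      rw [Gfun, if_neg (Nat.succ_ne_zero _)]
      simp only [Nat.add_sub_cancel, pn]
      rw [dif_pos hjN]
    rw [h1, Gfun]
    by_cases hj0 : (j : ℕ) = 0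
    · rw [if_pos hj0, sub_zero]
      exact hp0 m hm1 j
    · rw [if_neg hj0, pn, dif_pos (lt_of_le_of_lt (Nat.sub_le _ 1) hjN)]
      have hle : (⟨(j : ℕ) - 1, lt_of_le_of_lt (Nat.sub_le _ 1) hjN⟩ : Fin N) ≤ j := by
        simp only [Fin.le_def]
        exact Nat.sub_le _ 1
      have := hpmono m hm1 hle
      linarith

lemma Kfun_nonneg (hn : 1 ≤ n) (μ : Fin N → ℝ) (hμ0 : ∀ j, 0 ≤ μ j) (hμ1 : ∑ j, μ j = 1)
    (ℓ : Fin n → Fin N) : 0 ≤ Kfun μ n ℓ := by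
  classical
  set v : Finset (Fin n) → ℝ :=
    fun b => ((b.card - 1).factorial : ℝ) * Vfun μ ℓ b with hv
  have hK : Kfun μ n ℓ = -hS v (Finset.univ : Finset (Fin n)) := by
    rw [Kfun, hS, ← Finset.sum_neg_distrib]
    refine Finset.sum_congr rfl (fun σ _ => ?_)
    rw [pow_succ]
    ring
  rw [hK, neg_nonneg]
  have H : ∀ s : Finset (Fin n), s.Nonempty → ∃ a ∈ s, (0 ≤ v {a} ∧ v {a} ≤ 1) ∧
      ∀ b : Finset (Fin n), b ⊆ s.erase a → b.Nonempty → v (insert a b) = b.card * v b := by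
    intro s hs
    obtain ⟨a, has, hmin⟩ := Finset.exists_min_image s ℓ hs
    refine ⟨a, has, ⟨?_, ?_⟩, ?_⟩
    · rw [hv]
      simp only [Finset.card_singleton]
      rw [Nat.sub_self, Nat.factorial_zero, Nat.cast_one, one_mul, Vfun]
      refine Finset.sum_nonneg (fun ω _ => mul_nonneg (hμ0 ω) ?_)
      refine Finset.prod_nonneg (fun i _ => ?_)
      rw [ind]
      split <;> norm_num
    · rw [hv]
      simp only [Finset.card_singleton]
      rw [Nat.sub_self, Nat.factorial_zero, Nat.cast_one, one_mul, Vfun, ← hμ1]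
      refine Finset.sum_le_sum (fun ω _ => ?_)
      refine mul_le_of_le_one_right (hμ0 ω) ?_
      refine Finset.prod_le_one (fun i _ => ?_) (fun i _ => ?_) <;> rw [ind] <;>
        split <;> norm_num
    · intro b hbs hbne
      have hab : a ∉ b := fun h => (Finset.notMem_erase a s) (hbs h)
      have hcard : (insert a b).card = b.card + 1 := Finset.card_insert_of_notMem hab
      have hbpos : 0 < b.card := Finset.card_pos.2 hbne
      have hVeq : Vfun μ ℓ (insert a b) = Vfun μ ℓ b := by
        rw [Vfun, Vfun]
        refine Finset.sum_congr rfl (fun ω _ => ?_)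
        congr 1
        rw [Finset.prod_insert hab]
        obtain ⟨i₀, hi₀⟩ := hbne
        by_cases h : ℓ a ≤ ω
        · rw [ind, if_pos h, one_mul]
        · have hi₀0 : ind (ℓ i₀) ω = 0 := by
            rw [ind, if_neg]
            intro hc
            exact h (le_trans (hmin i₀ (Finset.mem_of_mem_erase (hbs hi₀))) hc)
          rw [Finset.prod_eq_zero hi₀ hi₀0, mul_zero]
      rw [hv]
      simp only
      rw [hcard, hVeq, Nat.add_sub_cancel]
      have hfact : ((b.card).factorial : ℝ) = (b.card : ℝ) * ((b.card - 1).factorial : ℝ) := by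
        rw [← Nat.cast_mul, Nat.mul_factorial_pred hbpos.ne']
      rw [hfact]
      ring
  have huniv : (Finset.univ : Finset (Fin n)).Nonempty := ⟨⟨0, hn⟩, Finset.mem_univ _⟩
  exact hS_nonpos v H Finset.univ huniv


end Stmt10

/-- Let `N ≥ 1`, `n ≥ 1`, let `μ` be probability weights on `{1,…,N}`,
and for each `k ≥ 1` let `p_k : {1,…,N} → ℝ` be nonnegative and nondecreasing.  Then
every coefficient of the formal power series `E_n(p,…,p)` is nonnegative. -/
theorem stmt10 (N n : ℕ) (hN : 1 ≤ N) (hn : 1 ≤ n)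
    (μ : Fin N → ℝ) (hμ0 : ∀ j, 0 ≤ μ j) (hμ1 : ∑ j, μ j = 1)
    (p : ℕ → Fin N → ℝ)
    (hp0 : ∀ k, 1 ≤ k → ∀ j, 0 ≤ p k j)
    (hpmono : ∀ k, 1 ≤ k → Monotone (p k)) :
    ∀ m : ℕ, 0 ≤ PowerSeries.coeff m (EnSer μ p n) := by
  intro m
  rw [Stmt10.EnSer_expand μ p, map_sum]
  refine Finset.sum_nonneg (fun ℓ _ => ?_)
  rw [PowerSeries.coeff_C_mul]
  refine mul_nonneg (Stmt10.Kfun_nonneg hn μ hμ0 hμ1 ℓ) ?_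
  exact Stmt10.NN_prod Finset.univ _ (fun i _ => Stmt10.NN_gSer p hp0 hpmono (ℓ i)) m
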